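/- Let E = {e} be the trivial monoid and k ≥ 0. The relation ≡ on E-pigmented words defined by p ≡ p' iff for every value i, min(|p|_i, k) = min(|p'|_i, k), where |p|_i denotes the number of letters of p with value i, is the smallest clone congruence of P(E) relating 1^e 2^e with 2^e 1^e (in arity 2) and (1^e)^{k+1} with (1^e)^k (in arity 1): ≡ is a clone congruence relating these pairs, and every clone congruence of P(E) relating these pairs contains ≡. -/

import Mathlib

/-- An `M`-pigmented word of arity `n`: a list of letters `(i, α)` whose value is
`i ∈ Fin n` (representing the value `i + 1 ∈ {1, …, n}`) and whose pigment is `α ∈ M`. -/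
abbrev PW (M : Type*) (n : ℕ) : Type _ := List (Fin n × M)

/-- The superposition `p⟨q 0, …, q (n-1)⟩` of pigmented words. -/
def pwSuper {M : Type*} [Monoid M] {n m : ℕ} (p : PW M n) (q : Fin n → PW M m) : PW M m :=
  p.flatMap (fun l => (q l.1).map (fun x => (x.1, l.2 * x.2)))

/-- A clone congruence of `P(M)`: an arity-indexed family of relations compatible
with the superposition maps. -/
def IsCloneCong {M : Type*} [Monoid M] (r : ∀ n, PW M n → PW M n → Prop) : Prop :=
  ∀ ⦃n m : ℕ⦄ ⦃p p' : PW M n⦄ ⦃q q' : Fin n → PW M m⦄,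
    r n p p' → (∀ i, r m (q i) (q' i)) → r m (pwSuper p q) (pwSuper p' q')

/-- The number of letters of `p` whose value is `i`. -/
def countV {M : Type*} {n : ℕ} (p : PW M n) (i : Fin n) : ℕ :=
  p.countP (fun x => decide (x.1 = i))

universe upw

lemma pwMapU {m : ℕ} (u : PUnit.{upw + 1}) (l : PW PUnit.{upw + 1} m) :
    l.map (fun x => (x.1, u * x.2)) = l := by
  induction l with
  | nil => rfl
  | cons a t ih => simp [ih]

lemma pwSuperU {n m : ℕ} (p : PW PUnit.{upw + 1} n) (q : Fin n → PW PUnit.{upw + 1} m) :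
    pwSuper p q = p.flatMap (fun l => q l.1) := by
  unfold pwSuper
  congr 1
  funext l
  exact pwMapU l.2 _

lemma countV_append {M : Type*} {n : ℕ} (a b : PW M n) (i : Fin n) :
    countV (a ++ b) i = countV a i + countV b i := List.countP_append

lemma countV_cons {M : Type*} {n : ℕ} (x : Fin n × M) (t : PW M n) (j : Fin n) :
    countV (x :: t) j = countV t j + if x.1 = j then 1 else 0 := by
  simp [countV, List.countP_cons]

lemma countV_super {n m : ℕ} (p : PW PUnit.{upw + 1} n) (q : Fin n → PW PUnit.{upw + 1} m) (i : Fin m) :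
    countV (pwSuper p q) i = ∑ j, countV p j * countV (q j) i := by
  induction p with
  | nil => simp [pwSuper, countV]
  | cons a t ih =>
    rw [pwSuperU] at ih ⊢
    rw [List.flatMap_cons, countV_append, ih]
    simp only [countV_cons, Nat.add_mul, Finset.sum_add_distrib, ite_mul, one_mul, zero_mul,
      Finset.sum_ite_eq, Finset.mem_univ, if_true]
    omega

lemma trunc_add (k a b : ℕ) : min (a + b) k = min (min a k + min b k) k := by omega

lemma trunc_mul (k a b : ℕ) : min (a * b) k = min (min a k * min b k) k := by
  rcases Nat.eq_zero_or_pos a with rfl | ha; · simp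
  rcases Nat.eq_zero_or_pos b with rfl | hb; · simp
  rcases le_or_gt a k with h | h <;> rcases le_or_gt b k with h' | h'
  · rw [min_eq_left h, min_eq_left h']
  · rw [min_eq_left h, min_eq_right h'.le,
      min_eq_right (Nat.le_mul_of_pos_left k ha),
      min_eq_right (le_trans h'.le (Nat.le_mul_of_pos_left b ha))]
  · rw [min_eq_right h.le, min_eq_left h',
      min_eq_right (Nat.le_mul_of_pos_right k hb),
      min_eq_right (le_trans h.le (Nat.le_mul_of_pos_right a hb))]
  · have h1 : k ≤ a * b := le_trans h.le (Nat.le_mul_of_pos_right a hb)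
    have h2 : k ≤ k * k := by nlinarith
    rw [min_eq_right h.le, min_eq_right h'.le, min_eq_right h1, min_eq_right h2]

lemma trunc_sum {ι : Type*} (k : ℕ) (s : Finset ι) (f g : ι → ℕ)
    (h : ∀ j ∈ s, min (f j) k = min (g j) k) :
    min (∑ j ∈ s, f j) k = min (∑ j ∈ s, g j) k := by
  classical
  induction s using Finset.induction_on with
  | empty => simp
  | insert _ _ hx ih =>
    rename_i a s
    rw [Finset.sum_insert hx, Finset.sum_insert hx, trunc_add, trunc_add k (g a),
      h a (Finset.mem_insert_self a s), ih (fun j hj => h j (Finset.mem_insert_of_mem hj))]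

lemma countV_replicate_fin1 (c : ℕ) (i : Fin 1) :
    countV (List.replicate c ((0 : Fin 1), (PUnit.unit : PUnit.{upw + 1}))) i = c := by
  induction c with
  | zero => rfl
  | succ c ih =>
    rw [List.replicate_succ, countV_cons, ih]
    simp [Subsingleton.elim (0 : Fin 1) i]

lemma pw_minimal (k : ℕ) (r : ∀ n, PW PUnit.{upw + 1} n → PW PUnit.{upw + 1} n → Prop)
    (hEq : ∀ n, Equivalence (r n)) (hC : IsCloneCong r)
    (hcomm : r 2 [((0 : Fin 2), PUnit.unit), ((1 : Fin 2), PUnit.unit)]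
        [((1 : Fin 2), PUnit.unit), ((0 : Fin 2), PUnit.unit)])
    (hred : r 1 (List.replicate (k + 1) ((0 : Fin 1), PUnit.unit))
        (List.replicate k ((0 : Fin 1), PUnit.unit)))
    (n : ℕ) (p p' : PW PUnit.{upw + 1} n)
    (h : ∀ i, min (countV p i) k = min (countV p' i) k) : r n p p' := by
  have hrefl : ∀ m (a : PW PUnit.{upw + 1} m), r m a a := fun m a => (hEq m).refl a
  have htrans : ∀ m (a b c : PW PUnit.{upw + 1} m), r m a b → r m b c → r m a c :=
    fun m a b c h1 h2 => (hEq m).trans h1 h2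
  have hsymm : ∀ m (a b : PW PUnit.{upw + 1} m), r m a b → r m b a :=
    fun m a b h1 => (hEq m).symm h1
  -- append congruence
  have happ : ∀ m (a a' b b' : PW PUnit.{upw + 1} m),
      r m a a' → r m b b' → r m (a ++ b) (a' ++ b') := by
    intro m a a' b b' h1 h2
    have := hC (q := ![a, b]) (q' := ![a', b'])
      (hrefl 2 [((0 : Fin 2), PUnit.unit), ((1 : Fin 2), PUnit.unit)])
      (fun i => by fin_cases i <;> assumption)
    simpa [pwSuperU] using this
  -- append commutativity
  have hcommapp : ∀ m (a b : PW PUnit.{upw + 1} m), r m (a ++ b) (b ++ a) := by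
    intro m a b
    have := hC (q := ![a, b]) (q' := ![a, b]) hcomm (fun i => hrefl m _)
    simpa [pwSuperU] using this
  -- replicate reduction (one step)
  have hrep1 : ∀ m (i : Fin m),
      r m (List.replicate (k + 1) (i, PUnit.unit)) (List.replicate k (i, PUnit.unit)) := by
    intro m i
    have e : ∀ c, pwSuper (List.replicate c ((0 : Fin 1), PUnit.unit))
        (fun _ => [(i, PUnit.unit)]) = List.replicate c (i, PUnit.unit) := by
      intro c
      induction c with
      | zero => rfl
      | succ c ih => simp only [pwSuperU] at ih ⊢; simp [List.replicate_succ,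
          List.flatMap_cons, ih]
    have := hC (q := fun _ => [(i, PUnit.unit)]) (q' := fun _ => [(i, PUnit.unit)])
      hred (fun _ => hrefl m _)
    rwa [e, e] at this
  -- replicate reduction to the truncation
  have hrepred : ∀ m (i : Fin m) (c : ℕ),
      r m (List.replicate c (i, PUnit.unit)) (List.replicate (min c k) (i, PUnit.unit)) := by
    intro m i c
    induction c with
    | zero => simpa using hrefl m _
    | succ c ih =>
      rcases le_or_gt (c + 1) k with hc | hc
      · rw [min_eq_left hc]; exact hrefl m _
      · have hck : k ≤ c := by omega
        have e1 : List.replicate (c + 1) (i, PUnit.unit)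
            = List.replicate (k + 1) (i, PUnit.unit) ++ List.replicate (c - k) (i, PUnit.unit) := by
          rw [← List.replicate_add]; congr 1; omega
        have e2 : List.replicate c (i, PUnit.unit)
            = List.replicate k (i, PUnit.unit) ++ List.replicate (c - k) (i, PUnit.unit) := by
          rw [← List.replicate_add]; congr 1; omega
        have step : r m (List.replicate (c + 1) (i, PUnit.unit))
            (List.replicate c (i, PUnit.unit)) := by
          rw [e1, e2]; exact happ m _ _ _ _ (hrep1 m i) (hrefl m _)
        have emin : min (c + 1) k = min c k := by omega
        rw [emin]
        exact htrans m _ _ _ step ih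
  -- r is stable under permutations
  have hperm : ∀ m (a b : PW PUnit.{upw + 1} m), a.Perm b → r m a b := by
    intro m a b hab
    induction hab with
    | nil => exact hrefl m _
    | cons x _ ih => exact happ m [x] [x] _ _ (hrefl m _) ih
    | swap x y l => exact happ m [y, x] [x, y] l l (hcommapp m [y] [x]) (hrefl m _)
    | trans _ _ ih1 ih2 => exact htrans m _ _ _ ih1 ih2
  -- flatMap congruence
  have hflat : ∀ {ι : Type} m (l : List ι) (f g : ι → PW PUnit.{upw + 1} m),
      (∀ x ∈ l, r m (f x) (g x)) → r m (l.flatMap f) (l.flatMap g) := by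
    intro ι m l f g hfg
    induction l with
    | nil => exact hrefl m _
    | cons x t ih =>
      rw [List.flatMap_cons, List.flatMap_cons]
      exact happ m _ _ _ _ (hfg x List.mem_cons_self)
        (ih (fun y hy => hfg y (List.mem_cons_of_mem x hy)))
  -- every word is a permutation of its sorted form
  have hsorted : ∀ m (a : PW PUnit.{upw + 1} m),
      a.Perm ((List.finRange m).flatMap
        (fun j => List.replicate (countV a j) (j, PUnit.unit))) := by
    intro m a
    have hcount : ∀ [BEq (Fin m × PUnit.{upw + 1})] [LawfulBEq (Fin m × PUnit.{upw + 1})]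
        (l : PW PUnit.{upw + 1} m) (i : Fin m),
        List.count (i, PUnit.unit) l = countV l i := by
      intro _ _ l i
      rw [List.count_eq_countP]
      apply List.countP_congr
      rintro ⟨x1, ⟨⟩⟩ _
      simp [Prod.ext_iff]
    have hflatP : ∀ {ι : Type} (l : List ι) (f : ι → PW PUnit.{upw + 1} m)
        (pred : Fin m × PUnit.{upw + 1} → Bool),
        List.countP pred (l.flatMap f) = (l.map fun x => List.countP pred (f x)).sum := by
      intro ι l f pred
      induction l with
      | nil => rfl
      | cons x t ih => simp [List.flatMap_cons, List.countP_append, ih]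
    have hrepP : ∀ (c : ℕ) (j i : Fin m),
        List.countP (fun x => decide (x.1 = i)) (List.replicate c (j, PUnit.unit))
          = if j = i then c else 0 := by
      intro c j i
      induction c with
      | zero => simp
      | succ c ih =>
        rw [List.replicate_succ, List.countP_cons, ih]
        by_cases hji : j = i <;> simp [hji]
    rw [List.perm_iff_count]
    rintro ⟨i, ⟨⟩⟩
    rw [hcount, hcount]
    show countV a i = List.countP _ _
    rw [hflatP, List.map_congr_left (fun x _ => hrepP (countV a x) x i), ← Fin.sum_univ_def,
      Finset.sum_ite_eq' Finset.univ i (fun x => countV a x)]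
    simp
  -- normal form
  have hnf : ∀ (a : PW PUnit.{upw + 1} n),
      r n a ((List.finRange n).flatMap
        (fun j => List.replicate (min (countV a j) k) (j, PUnit.unit))) := by
    intro a
    refine htrans n _ _ _ (hperm n _ _ (hsorted n a)) (hflat n _ _ _ ?_)
    intro j _
    exact hrepred n j (countV a j)
  have hnfeq : ((List.finRange n).flatMap
        (fun j => List.replicate (min (countV p j) k) (j, PUnit.unit)))
      = ((List.finRange n).flatMap
        (fun j => List.replicate (min (countV p' j) k) (j, PUnit.unit))) := by
    congr 1
    funext j
    rw [h j]
  exact htrans n _ _ _ (hnf p) (hnfeq ▸ hsymm n _ _ (hnf p'))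

/-- Over the trivial monoid `E = PUnit`, the relation `p ≡ p'` iff
`min(|p|_i, k) = min(|p'|_i, k)` for every value `i` is the smallest clone congruence
of `P(E)` relating `1^e 2^e` with `2^e 1^e` and `(1^e)^{k+1}` with `(1^e)^k`. -/
theorem incK_smallest_cloneCongruence (k : ℕ) :
    (∀ n, Equivalence
      (fun p p' : PW PUnit n => ∀ i, min (countV p i) k = min (countV p' i) k)) ∧
    IsCloneCong
      (fun n (p p' : PW PUnit n) => ∀ i, min (countV p i) k = min (countV p' i) k) ∧
    (∀ i : Fin 2,
      min (countV ([((0 : Fin 2), PUnit.unit), ((1 : Fin 2), PUnit.unit)] : PW PUnit 2) i) k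
        = min (countV ([((1 : Fin 2), PUnit.unit), ((0 : Fin 2), PUnit.unit)] : PW PUnit 2) i) k) ∧
    (∀ i : Fin 1,
      min (countV (List.replicate (k + 1) ((0 : Fin 1), PUnit.unit)) i) k
        = min (countV (List.replicate k ((0 : Fin 1), PUnit.unit)) i) k) ∧
    (∀ r : ∀ n, PW PUnit n → PW PUnit n → Prop,
      (∀ n, Equivalence (r n)) → IsCloneCong r →
      r 2 [((0 : Fin 2), PUnit.unit), ((1 : Fin 2), PUnit.unit)]
        [((1 : Fin 2), PUnit.unit), ((0 : Fin 2), PUnit.unit)] →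
      r 1 (List.replicate (k + 1) ((0 : Fin 1), PUnit.unit))
        (List.replicate k ((0 : Fin 1), PUnit.unit)) →
      ∀ (n : ℕ) (p p' : PW PUnit n),
        (∀ i, min (countV p i) k = min (countV p' i) k) → r n p p') := by
  refine ⟨fun n => ⟨fun p i => rfl, fun h i => (h i).symm,
    fun h1 h2 i => (h1 i).trans (h2 i)⟩, ?_, ?_, ?_, ?_⟩
  · intro n m p p' q q' hp hq i
    rw [countV_super, countV_super]
    exact trunc_sum k _ _ _ (fun j _ => by rw [trunc_mul, hp j, hq j i, ← trunc_mul])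
  · intro i
    fin_cases i <;> rfl
  · intro i
    rw [countV_replicate_fin1, countV_replicate_fin1]
    omega
  · exact fun r hEq hC hcomm hred n p p' h => pw_minimal k r hEq hC hcomm hred n p p' h
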